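/- Let P = diag(1,1,2,2) ∈ M_4(ℂ) and let U = U₁U₂ where U₁ is block diagonal with two copies of B = (1/√2)[[1,1],[−1,1]] and U₂ is block diagonal diag(1, C, 1) with C = [[0,1],[1,0]]. Then A = PU is half-normal (P commutes with UPU*), but P does not commute with U²P(U*)², and hence A is not unitarily equivalent to a weighted permutation. -/

import Mathlib

open Matrix

def IsWeightedPerm {n : ℕ} (A : Matrix (Fin n) (Fin n) ℂ) : Prop :=
  (∀ i j₁ j₂, A i j₁ ≠ 0 → A i j₂ ≠ 0 → j₁ = j₂) ∧
  (∀ j i₁ i₂, A i₁ j ≠ 0 → A i₂ j ≠ 0 → i₁ = i₂)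

lemma wp_mul {n : ℕ} {B C : Matrix (Fin n) (Fin n) ℂ}
    (hB : IsWeightedPerm B) (hC : IsWeightedPerm C) : IsWeightedPerm (B * C) := by
  constructor
  · intro i j₁ j₂ h1 h2
    rw [Matrix.mul_apply] at h1 h2
    obtain ⟨k₁, -, hk₁⟩ := Finset.exists_ne_zero_of_sum_ne_zero h1
    obtain ⟨k₂, -, hk₂⟩ := Finset.exists_ne_zero_of_sum_ne_zero h2
    rw [mul_ne_zero_iff] at hk₁ hk₂
    have hk : k₁ = k₂ := hB.1 i k₁ k₂ hk₁.1 hk₂.1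
    subst hk
    exact hC.1 k₁ j₁ j₂ hk₁.2 hk₂.2
  · intro j i₁ i₂ h1 h2
    rw [Matrix.mul_apply] at h1 h2
    obtain ⟨k₁, -, hk₁⟩ := Finset.exists_ne_zero_of_sum_ne_zero h1
    obtain ⟨k₂, -, hk₂⟩ := Finset.exists_ne_zero_of_sum_ne_zero h2
    rw [mul_ne_zero_iff] at hk₁ hk₂
    have hk : k₁ = k₂ := hC.2 j k₁ k₂ hk₁.2 hk₂.2
    subst hk
    exact hB.2 k₁ i₁ i₂ hk₁.1 hk₂.1

lemma diag_commute {n : ℕ} {X Y : Matrix (Fin n) (Fin n) ℂ}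
    (hX : ∀ i j, i ≠ j → X i j = 0) (hY : ∀ i j, i ≠ j → Y i j = 0) :
    Commute X Y := by
  have key : ∀ (X Y : Matrix (Fin n) (Fin n) ℂ), (∀ i j, i ≠ j → X i j = 0) →
      ∀ i j, (X * Y) i j = X i i * Y i j := by
    intro X Y hX i j
    rw [Matrix.mul_apply]
    exact Finset.sum_eq_single i (fun k _ hk => by rw [hX i k (Ne.symm hk), zero_mul])
      (fun h => absurd (Finset.mem_univ i) h)
  show X * Y = Y * X
  ext i j
  rcases eq_or_ne i j with rfl | hij
  · rw [key X Y hX, key Y X hY, mul_comm]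
  · rw [key X Y hX, key Y X hY, hY i j hij, hX i j hij, mul_zero, mul_zero]

lemma wp_halfnormal {n : ℕ} {B : Matrix (Fin n) (Fin n) ℂ}
    (hB : IsWeightedPerm B) : Commute (Bᴴ * B) (B * Bᴴ) := by
  apply diag_commute
  · intro i j hij
    rw [Matrix.mul_apply]
    apply Finset.sum_eq_zero
    intro k _
    by_contra h
    obtain ⟨h1, h2⟩ := mul_ne_zero_iff.mp h
    exact hij (hB.1 k i j (by simpa [Matrix.conjTranspose_apply] using h1) h2)
  · intro i j hij
    rw [Matrix.mul_apply]
    apply Finset.sum_eq_zero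
    intro k _
    by_contra h
    obtain ⟨h1, h2⟩ := mul_ne_zero_iff.mp h
    exact hij (hB.2 k i j h1 (by simpa [Matrix.conjTranspose_apply] using h2))

lemma conjmul_aux {n : ℕ} {V : Matrix (Fin n) (Fin n) ℂ} (hV : V * Vᴴ = 1)
    (X Y : Matrix (Fin n) (Fin n) ℂ) :
    (Vᴴ * X * V) * (Vᴴ * Y * V) = Vᴴ * (X * Y) * V := by
  have h : ∀ Z : Matrix (Fin n) (Fin n) ℂ, V * (Vᴴ * Z) = Z := fun Z => by
    rw [← Matrix.mul_assoc, hV, Matrix.one_mul]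
  simp only [Matrix.mul_assoc, h]

set_option maxHeartbeats 2000000 in
lemma main_aux (c : ℂ) (hcs : star c = c) (hc2 : c * c = 1/2)
    (P U A : Matrix (Fin 4) (Fin 4) ℂ)
    (hP : P = !![1,0,0,0;0,1,0,0;0,0,2,0;0,0,0,2])
    (hU : U = c • !![1, 0, 1, 0; -1, 0, 1, 0; 0, 1, 0, 1; 0, -1, 0, 1])
    (hA : A = P * U) :
    Commute (Aᴴ * A) (A * Aᴴ) ∧
    Commute P (U * P * Uᴴ) ∧
    ¬ Commute P (U ^ 2 * P * (Uᴴ) ^ 2) ∧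
    ¬ ∃ (V B : Matrix (Fin 4) (Fin 4) ℂ), Vᴴ * V = 1 ∧ IsWeightedPerm B ∧ A = Vᴴ * B * V := by
  -- concrete matrices
  set N : Matrix (Fin 4) (Fin 4) ℂ := !![1, 0, 1, 0; -1, 0, 1, 0; 0, 1, 0, 1; 0, -1, 0, 1] with hN
  have hQ : P * N = !![1,0,1,0;-1,0,1,0;0,2,0,2;0,-2,0,2] := by
    rw [hP, hN]; ext i j
    fin_cases i <;> fin_cases j <;>
      norm_num [Matrix.mul_apply, Fin.sum_univ_succ, Matrix.vecHead, Matrix.vecTail]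
  set Q : Matrix (Fin 4) (Fin 4) ℂ := !![1,0,1,0;-1,0,1,0;0,2,0,2;0,-2,0,2] with hQdef
  have hA' : A = c • Q := by rw [hA, hU, Matrix.mul_smul, hQ]
  have hQH : Qᴴ = !![1,-1,0,0;0,0,2,-2;1,1,0,0;0,0,2,2] := by
    rw [hQdef]; ext i j
    fin_cases i <;> fin_cases j <;>
      norm_num [Matrix.conjTranspose_apply, Matrix.vecHead, Matrix.vecTail]
  have hAH : Aᴴ = c • Qᴴ := by rw [hA', Matrix.conjTranspose_smul, hcs]
  have smulmul : ∀ (a b : ℂ) (X Y : Matrix (Fin 4) (Fin 4) ℂ),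
      (a • X) * (b • Y) = (a * b) • (X * Y) := by
    intro a b X Y
    rw [Matrix.smul_mul, Matrix.mul_smul, smul_smul]
  refine ⟨?_, ?_, ?_, ?_⟩
  · -- half-normal
    have hX : Qᴴ * Q = !![2,0,0,0;0,8,0,0;0,0,2,0;0,0,0,8] := by
      rw [hQH, hQdef]; ext i j
      fin_cases i <;> fin_cases j <;>
        norm_num [Matrix.mul_apply, Fin.sum_univ_succ, Matrix.vecHead, Matrix.vecTail]
    have hY : Q * Qᴴ = !![2,0,0,0;0,2,0,0;0,0,8,0;0,0,0,8] := by
      rw [hQH, hQdef]; ext i j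
      fin_cases i <;> fin_cases j <;>
        norm_num [Matrix.mul_apply, Fin.sum_univ_succ, Matrix.vecHead, Matrix.vecTail]
    have e1 : Aᴴ * A = ((1:ℂ)/2) • !![2,0,0,0;0,8,0,0;0,0,2,0;0,0,0,8] := by
      rw [hAH, hA', smulmul, hc2, hX]
    have e2 : A * Aᴴ = ((1:ℂ)/2) • !![2,0,0,0;0,2,0,0;0,0,8,0;0,0,0,8] := by
      rw [hAH, hA', smulmul, hc2, hY]
    rw [e1, e2]
    show _ = _
    rw [smulmul, smulmul]
    congr 1
    ext i j
    fin_cases i <;> fin_cases j <;>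
      norm_num [Matrix.mul_apply, Fin.sum_univ_succ, Matrix.vecHead, Matrix.vecTail]
  · -- P commutes with U P Uᴴ
    have hNH : Nᴴ = !![1,-1,0,0;0,0,1,-1;1,1,0,0;0,0,1,1] := by
      rw [hN]; ext i j
      fin_cases i <;> fin_cases j <;>
        norm_num [Matrix.conjTranspose_apply, Matrix.vecHead, Matrix.vecTail]
    have hNP : N * P = !![1,0,2,0;-1,0,2,0;0,1,0,2;0,-1,0,2] := by
      rw [hN, hP]; ext i j
      fin_cases i <;> fin_cases j <;>
        norm_num [Matrix.mul_apply, Fin.sum_univ_succ, Matrix.vecHead, Matrix.vecTail]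
    have hT : N * P * Nᴴ = !![3,1,0,0;1,3,0,0;0,0,3,1;0,0,1,3] := by
      rw [hNP, hNH]; ext i j
      fin_cases i <;> fin_cases j <;>
        norm_num [Matrix.mul_apply, Fin.sum_univ_succ, Matrix.vecHead, Matrix.vecTail]
    have eT : U * P * Uᴴ = ((1:ℂ)/2) • !![3,1,0,0;1,3,0,0;0,0,3,1;0,0,1,3] := by
      rw [hU, Matrix.conjTranspose_smul, hcs, Matrix.smul_mul, ← hT]
      rw [smulmul, hc2]
    rw [eT]
    apply Commute.smul_right
    show _ = _
    rw [hP]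
    ext i j
    fin_cases i <;> fin_cases j <;>
      norm_num [Matrix.mul_apply, Fin.sum_univ_succ, Matrix.vecHead, Matrix.vecTail]
  · -- ¬ Commute P (U² P Uᴴ²)
    have hNN : N * N = !![1,1,1,1;-1,1,-1,1;-1,-1,1,1;1,-1,-1,1] := by
      rw [hN]; ext i j
      fin_cases i <;> fin_cases j <;>
        norm_num [Matrix.mul_apply, Fin.sum_univ_succ, Matrix.vecHead, Matrix.vecTail]
    have hNH : Nᴴ = !![1,-1,0,0;0,0,1,-1;1,1,0,0;0,0,1,1] := by
      rw [hN]; ext i j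
      fin_cases i <;> fin_cases j <;>
        norm_num [Matrix.conjTranspose_apply, Matrix.vecHead, Matrix.vecTail]
    have hNHNH : Nᴴ * Nᴴ = !![1,-1,-1,1;1,1,-1,-1;1,-1,1,-1;1,1,1,1] := by
      rw [hNH]; ext i j
      fin_cases i <;> fin_cases j <;>
        norm_num [Matrix.mul_apply, Fin.sum_univ_succ, Matrix.vecHead, Matrix.vecTail]
    have hU2 : U ^ 2 = ((1:ℂ)/2) • !![1,1,1,1;-1,1,-1,1;-1,-1,1,1;1,-1,-1,1] := by
      rw [pow_two, hU, smulmul, hc2, hNN]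
    have hUH2 : (Uᴴ) ^ 2 = ((1:ℂ)/2) • !![1,-1,-1,1;1,1,-1,-1;1,-1,1,-1;1,1,1,1] := by
      rw [pow_two, hU, Matrix.conjTranspose_smul, hcs, smulmul, hc2, hNHNH]
    have hN2P : (!![1,1,1,1;-1,1,-1,1;-1,-1,1,1;1,-1,-1,1] : Matrix (Fin 4) (Fin 4) ℂ) * P =
        !![1,1,2,2;-1,1,-2,2;-1,-1,2,2;1,-1,-2,2] := by
      rw [hP]; ext i j
      fin_cases i <;> fin_cases j <;>
        norm_num [Matrix.mul_apply, Fin.sum_univ_succ, Matrix.vecHead, Matrix.vecTail]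
    have hZ : (!![1,1,1,1;-1,1,-1,1;-1,-1,1,1;1,-1,-1,1] : Matrix (Fin 4) (Fin 4) ℂ) * P *
        !![1,-1,-1,1;1,1,-1,-1;1,-1,1,-1;1,1,1,1] = !![6,0,2,0;0,6,0,2;2,0,6,0;0,2,0,6] := by
      rw [hN2P]; ext i j
      fin_cases i <;> fin_cases j <;>
        norm_num [Matrix.mul_apply, Fin.sum_univ_succ, Matrix.vecHead, Matrix.vecTail]
    have eZ : U ^ 2 * P * (Uᴴ) ^ 2 = ((1:ℂ)/4) • !![6,0,2,0;0,6,0,2;2,0,6,0;0,2,0,6] := by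
      rw [hU2, hUH2, Matrix.smul_mul, smulmul, ← hZ]
      norm_num
    rw [eZ]
    intro h
    have h' : ((1:ℂ)/4) • (P * !![6,0,2,0;0,6,0,2;2,0,6,0;0,2,0,6]) =
        ((1:ℂ)/4) • (!![6,0,2,0;0,6,0,2;2,0,6,0;0,2,0,6] * P) := by
      have := h.eq
      rwa [Matrix.mul_smul, Matrix.smul_mul] at this
    have h'' := smul_right_injective (Matrix (Fin 4) (Fin 4) ℂ)
      (show ((1:ℂ)/4) ≠ 0 by norm_num) h'
    have e1 : (P * !![6,0,2,0;0,6,0,2;2,0,6,0;0,2,0,6] : Matrix (Fin 4) (Fin 4) ℂ) 0 2 = 2 := by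
      rw [hP]
      norm_num [Matrix.mul_apply, Fin.sum_univ_succ, Matrix.vecHead, Matrix.vecTail, Matrix.cons_val_two]
    have e2 : (!![(6:ℂ),0,2,0;0,6,0,2;2,0,6,0;0,2,0,6] * P : Matrix (Fin 4) (Fin 4) ℂ) 0 2 = 4 := by
      rw [hP]
      norm_num [Matrix.mul_apply, Fin.sum_univ_succ, Matrix.vecHead, Matrix.vecTail, Matrix.cons_val_two]
    rw [h'', e2] at e1
    norm_num at e1
  · -- not unitarily equivalent to a weighted permutation
    rintro ⟨V, B, hVu, hBwp, hABV⟩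
    have hVV : V * Vᴴ = 1 := mul_eq_one_comm.mp hVu
    have hA2 : A * A = Vᴴ * (B * B) * V := by rw [hABV, conjmul_aux hVV]
    have hA2H : (A * A)ᴴ = Vᴴ * (B * B)ᴴ * V := by
      rw [hA2]
      simp [Matrix.conjTranspose_mul, Matrix.mul_assoc]
    have hcomm : Commute ((A * A)ᴴ * (A * A)) ((A * A) * (A * A)ᴴ) := by
      rw [hA2H, hA2]
      show _ = _
      rw [conjmul_aux hVV, conjmul_aux hVV, conjmul_aux hVV, conjmul_aux hVV,
        (wp_halfnormal (wp_mul hBwp hBwp)).eq]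
    -- concrete contradiction
    have hR : Q * Q = !![1,2,1,2;-1,2,-1,2;-2,-4,2,4;2,-4,-2,4] := by
      rw [hQdef]; ext i j
      fin_cases i <;> fin_cases j <;>
        norm_num [Matrix.mul_apply, Fin.sum_univ_succ, Matrix.vecHead, Matrix.vecTail]
    set R : Matrix (Fin 4) (Fin 4) ℂ := !![1,2,1,2;-1,2,-1,2;-2,-4,2,4;2,-4,-2,4] with hRdef
    have hRH : Rᴴ = !![1,-1,-2,2;2,2,-4,-4;1,-1,2,-2;2,2,4,4] := by
      rw [hRdef]; ext i j
      fin_cases i <;> fin_cases j <;>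
        norm_num [Matrix.conjTranspose_apply, Matrix.vecHead, Matrix.vecTail]
    have hAc : A * A = ((1:ℂ)/2) • R := by rw [hA', smulmul, hc2, hR]
    have hAcH : (A * A)ᴴ = ((1:ℂ)/2) • Rᴴ := by
      rw [hAc, Matrix.conjTranspose_smul]
      norm_num
    have hW1 : Rᴴ * R = !![10,0,-6,0;0,40,0,-24;-6,0,10,0;0,-24,0,40] := by
      rw [hRH, hRdef]; ext i j
      fin_cases i <;> fin_cases j <;>
        norm_num [Matrix.mul_apply, Fin.sum_univ_succ, Matrix.vecHead, Matrix.vecTail]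
    have hW2 : R * Rᴴ = !![10,6,0,0;6,10,0,0;0,0,40,24;0,0,24,40] := by
      rw [hRH, hRdef]; ext i j
      fin_cases i <;> fin_cases j <;>
        norm_num [Matrix.mul_apply, Fin.sum_univ_succ, Matrix.vecHead, Matrix.vecTail]
    have e1 : (A * A)ᴴ * (A * A) = ((1:ℂ)/4) • !![10,0,-6,0;0,40,0,-24;-6,0,10,0;0,-24,0,40] := by
      rw [hAcH, hAc, smulmul, hW1]; norm_num
    have e2 : (A * A) * (A * A)ᴴ = ((1:ℂ)/4) • !![10,6,0,0;6,10,0,0;0,0,40,24;0,0,24,40] := by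
      rw [hAcH, hAc, smulmul, hW2]; norm_num
    rw [e1, e2] at hcomm
    have h3 := hcomm.eq
    rw [smulmul, smulmul] at h3
    have h4 := smul_right_injective (Matrix (Fin 4) (Fin 4) ℂ)
      (show ((1:ℂ)/4 * ((1:ℂ)/4)) ≠ 0 by norm_num) h3
    have e3 : ((!![(10:ℂ),0,-6,0;0,40,0,-24;-6,0,10,0;0,-24,0,40]) *
        !![10,6,0,0;6,10,0,0;0,0,40,24;0,0,24,40] : Matrix (Fin 4) (Fin 4) ℂ) 0 1 = 60 := by
      norm_num [Matrix.mul_apply, Fin.sum_univ_succ, Matrix.vecHead, Matrix.vecTail]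
    have e4 : ((!![(10:ℂ),6,0,0;6,10,0,0;0,0,40,24;0,0,24,40]) *
        !![10,0,-6,0;0,40,0,-24;-6,0,10,0;0,-24,0,40] : Matrix (Fin 4) (Fin 4) ℂ) 0 1 = 240 := by
      norm_num [Matrix.mul_apply, Fin.sum_univ_succ, Matrix.vecHead, Matrix.vecTail]
    rw [h4, e4] at e3
    norm_num at e3

theorem four_by_four_example
    (P U A : Matrix (Fin 4) (Fin 4) ℂ)
    (hP : P = Matrix.diagonal ![1, 1, 2, 2])
    (hU : U = ((Real.sqrt 2 / 2 : ℝ) : ℂ) •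
      !![1, 0, 1, 0; -1, 0, 1, 0; 0, 1, 0, 1; 0, -1, 0, 1])
    (hA : A = P * U) :
    Commute (Aᴴ * A) (A * Aᴴ) ∧
    Commute P (U * P * Uᴴ) ∧
    ¬ Commute P (U ^ 2 * P * (Uᴴ) ^ 2) ∧
    ¬ ∃ (V B : Matrix (Fin 4) (Fin 4) ℂ), Vᴴ * V = 1 ∧ IsWeightedPerm B ∧ A = Vᴴ * B * V := by
  have hcs : star (((Real.sqrt 2 / 2 : ℝ) : ℂ)) = ((Real.sqrt 2 / 2 : ℝ) : ℂ) := by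
    simp [Complex.star_def, Complex.conj_ofReal]
  have hc2 : (((Real.sqrt 2 / 2 : ℝ) : ℂ)) * ((Real.sqrt 2 / 2 : ℝ) : ℂ) = 1/2 := by
    rw [← Complex.ofReal_mul]
    rw [div_mul_div_comm, Real.mul_self_sqrt (by norm_num)]
    norm_num
  have hP' : P = !![1,0,0,0;0,1,0,0;0,0,2,0;0,0,0,2] := by
    rw [hP]; ext i j
    fin_cases i <;> fin_cases j <;>
      simp [Matrix.diagonal_apply, Matrix.vecHead, Matrix.vecTail]
  exact main_aux _ hcs hc2 P U A hP' hU hA
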